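/- A Borel subset B of the Baire space ω^ω belongs to the tree ideal l₀ if and only if B does not contain the body [T] of any Laver tree T. -/

import Mathlib

open Cardinal Set MeasureTheory

/-- A tree on ω: a nonempty set of finite sequences closed under initial segments. -/
def IsTree (T : Set (List ℕ)) : Prop :=
  T.Nonempty ∧ ∀ s ∈ T, ∀ n : ℕ, s.take n ∈ T

/-- The body of a tree: all infinite branches. -/
def treeBody (T : Set (List ℕ)) : Set (ℕ → ℕ) :=
  {x | ∀ n : ℕ, (List.ofFn fun i : Fin n => x i) ∈ T}

/-- Immediate successors of a node in a tree. -/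
def succs (T : Set (List ℕ)) (t : List ℕ) : Set ℕ := {n | t ++ [n] ∈ T}

/-- Sacks (perfect) tree: every node has an extension with at least two immediate successors. -/
def IsSacksTree (T : Set (List ℕ)) : Prop :=
  IsTree T ∧ ∀ s ∈ T, ∃ t ∈ T, s <+: t ∧ (succs T t).Nontrivial

/-- Miller tree: every node has an extension with infinitely many immediate successors. -/
def IsMillerTree (T : Set (List ℕ)) : Prop :=
  IsTree T ∧ ∀ s ∈ T, ∃ t ∈ T, s <+: t ∧ (succs T t).Infinite

/-- Laver tree: has a stem (a node comparable with every node) such that every node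
extending the stem has infinitely many immediate successors. -/
def IsLaverTree (T : Set (List ℕ)) : Prop :=
  IsTree T ∧ ∃ s ∈ T, (∀ t ∈ T, s <+: t ∨ t <+: s) ∧
    ∀ t ∈ T, s <+: t → (succs T t).Infinite

/-- Complete Laver tree: every node has infinitely many immediate successors. -/
def IsCompleteLaverTree (T : Set (List ℕ)) : Prop :=
  IsTree T ∧ ∀ t ∈ T, (succs T t).Infinite

/-- The tree ideal t₀ associated with a family of trees 𝕋. -/
def treeIdeal (𝕋 : Set (Set (List ℕ))) : Set (Set (ℕ → ℕ)) :=
  {A | ∀ P ∈ 𝕋, ∃ Q ∈ 𝕋, Q ⊆ P ∧ treeBody Q ∩ A = ∅}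

/-- t-measurability with respect to a family of trees 𝕋. -/
def TMeasurable (𝕋 : Set (Set (List ℕ))) (A : Set (ℕ → ℕ)) : Prop :=
  ∀ P ∈ 𝕋, ∃ Q ∈ 𝕋, Q ⊆ P ∧ (treeBody Q ⊆ A ∨ treeBody Q ∩ A = ∅)

/-- 𝕋-Bernstein set: meets and omits the body of every tree in 𝕋. -/
def TBernstein (𝕋 : Set (Set (List ℕ))) (B : Set (ℕ → ℕ)) : Prop :=
  ∀ T ∈ 𝕋, (B ∩ treeBody T).Nonempty ∧ (B \ treeBody T).Nonempty

/-! ### Basic helpers -/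

/-- Laver tree with a specified stem. -/
def LStem (s : List ℕ) (T : Set (List ℕ)) : Prop :=
  IsTree T ∧ s ∈ T ∧ (∀ t ∈ T, s <+: t ∨ t <+: s) ∧
    ∀ t ∈ T, s <+: t → (succs T t).Infinite

lemma LStem.isLaver {s T} (h : LStem s T) : IsLaverTree T :=
  ⟨h.1, s, h.2.1, h.2.2.1, h.2.2.2⟩

lemma isLaver_iff {T} : IsLaverTree T ↔ ∃ s, LStem s T := by
  constructor
  · rintro ⟨h1, s, h2, h3, h4⟩; exact ⟨s, h1, h2, h3, h4⟩
  · rintro ⟨s, h⟩; exact h.isLaver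

/-- the finite initial segment of x of length n, as a list -/
def seg (x : ℕ → ℕ) (n : ℕ) : List ℕ := List.ofFn fun i : Fin n => x i

lemma seg_length (x : ℕ → ℕ) (n : ℕ) : (seg x n).length = n := by simp [seg]

lemma seg_getElem (x : ℕ → ℕ) {n i : ℕ} (h : i < (seg x n).length) :
    (seg x n)[i] = x i := by
  simp [seg]

lemma seg_take (x : ℕ → ℕ) (m n : ℕ) : (seg x n).take m = seg x (min m n) := by
  apply List.ext_getElem
  · simp [seg_length]
  · intro i h1 h2
    rw [List.getElem_take, seg_getElem, seg_getElem]

lemma seg_prefix (x : ℕ → ℕ) {m n : ℕ} (h : m ≤ n) : seg x m <+: seg x n := by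
  rw [List.prefix_iff_eq_take, seg_length, seg_take, min_eq_left h]

lemma mem_treeBody {T x} : x ∈ treeBody T ↔ ∀ n, seg x n ∈ T := Iff.rfl

lemma treeBody_mono {S T : Set (List ℕ)} (h : S ⊆ T) : treeBody S ⊆ treeBody T :=
  fun _ hx n => h (hx n)

/-- the subtree of nodes comparable with t -/
def subAt (T : Set (List ℕ)) (t : List ℕ) : Set (List ℕ) :=
  {u ∈ T | u <+: t ∨ t <+: u}

lemma subAt_subset (T t) : subAt T t ⊆ T := fun _ h => h.1

lemma LStem.subAt {s T} (h : LStem s T) {t : List ℕ} (ht : t ∈ T) (hst : s <+: t) :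
    LStem t (subAt T t) := by
  obtain ⟨⟨hne, htake⟩, hsT, hcomp, hsucc⟩ := h
  refine ⟨⟨⟨t, ht, Or.inl List.prefix_rfl⟩, ?_⟩, ⟨ht, Or.inl List.prefix_rfl⟩,
    fun u hu => hu.2.symm, ?_⟩
  · rintro u ⟨huT, hu⟩ n
    refine ⟨htake u huT n, ?_⟩
    rcases hu with hu | hu
    · exact Or.inl ((List.take_prefix n u).trans hu)
    · exact List.prefix_or_prefix_of_prefix (List.take_prefix n u) hu
  · rintro u ⟨huT, hu⟩ htu
    refine (hsucc u huT (hst.trans htu)).mono ?_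
    intro n hn
    exact ⟨hn, Or.inr (htu.trans ⟨[n], rfl⟩)⟩

/-! ### Branches through Laver trees -/

section Branch
variable {s : List ℕ} {T : Set (List ℕ)} (h : LStem s T)

/-- pick a successor of a node -/
noncomputable def pickSucc (T : Set (List ℕ)) (t : List ℕ) : ℕ :=
  letI := Classical.dec ((succs T t).Infinite)
  if h : (succs T t).Infinite then h.nonempty.some else 0

/-- the chain of nodes extending the stem -/
noncomputable def chain (s : List ℕ) (T : Set (List ℕ)) : ℕ → List ℕ
  | 0 => s
  | n + 1 => chain s T n ++ [pickSucc T (chain s T n)]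

lemma chain_spec (h : LStem s T) (n : ℕ) :
    chain s T n ∈ T ∧ s <+: chain s T n ∧ (chain s T n).length = s.length + n := by
  induction n with
  | zero => exact ⟨h.2.1, List.prefix_rfl, rfl⟩
  | succ n ih =>
    obtain ⟨h1, h2, h3⟩ := ih
    have hinf : (succs T (chain s T n)).Infinite := h.2.2.2 _ h1 h2
    have hmem : chain s T n ++ [pickSucc T (chain s T n)] ∈ T := by
      have := hinf.nonempty.some_mem
      simp only [pickSucc, dif_pos hinf]
      exact this
    have hc : chain s T (n+1) = chain s T n ++ [pickSucc T (chain s T n)] := rfl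
    rw [hc]
    exact ⟨hmem, h2.trans ⟨_, rfl⟩, by simp [h3]; omega⟩

lemma chain_mono (h : LStem s T) {m n : ℕ} (hmn : m ≤ n) : chain s T m <+: chain s T n := by
  induction n with
  | zero => simp_all
  | succ n ih =>
    rcases Nat.lt_or_ge m (n+1) with h1 | h1
    · exact (ih (by omega)).trans ⟨_, rfl⟩
    · have : m = n + 1 := by omega
      subst this; exact List.prefix_rfl

/-- the canonical branch through a Laver tree -/
noncomputable def laverBranch (s : List ℕ) (T : Set (List ℕ)) : ℕ → ℕ :=
  fun i => (chain s T (i + 1)).getD i 0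

lemma laverBranch_mem (h : LStem s T) : laverBranch s T ∈ treeBody T := by
  intro n
  have key : (seg (laverBranch s T) n : List ℕ) = (chain s T n).take n := by
    apply List.ext_getElem
    · simp only [seg_length, List.length_take, (chain_spec h n).2.2]; omega
    · intro i h1 h2
      rw [seg_getElem]
      have hlen : i < (chain s T (i+1)).length := by
        rw [(chain_spec h (i+1)).2.2]; omega
      have : laverBranch s T i = (chain s T (i+1))[i] := by
        simp [laverBranch, List.getD_eq_getElem?_getD, List.getElem?_eq_getElem hlen]
      rw [this, List.getElem_take]
      have hpre : chain s T (i+1) <+: chain s T n := chain_mono h (by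
        simp only [seg_length] at h1
        omega)
      exact hpre.getElem hlen
  show seg (laverBranch s T) n ∈ T
  rw [key]
  exact h.1.2 _ (chain_spec h n).1 n

lemma LStem.body_nonempty (h : LStem s T) : (treeBody T).Nonempty :=
  ⟨laverBranch s T, laverBranch_mem h⟩

lemma exists_long_node (h : LStem s T) (k : ℕ) :
    ∃ t ∈ T, s <+: t ∧ k ≤ t.length := by
  obtain ⟨h1, h2, h3⟩ := chain_spec h k
  exact ⟨chain s T k, h1, h2, by omega⟩

end Branch

/-! ### The stem lemma: dense avoidance implies stem-preserving avoidance -/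

/-- nodes above the stem admitting a Laver subtree avoiding B with that node as stem -/
def Wset (P : Set (List ℕ)) (B : Set (ℕ → ℕ)) (s : List ℕ) : Set (List ℕ) :=
  {t | s <+: t ∧ ∃ R, LStem t R ∧ R ⊆ P ∧ treeBody R ∩ B = ∅}

noncomputable def Rfun (P : Set (List ℕ)) (B : Set (ℕ → ℕ)) (s : List ℕ) :
    List ℕ → Set (List ℕ) := fun t =>
  letI := Classical.dec (t ∈ Wset P B s)
  if h : t ∈ Wset P B s then h.2.choose else ∅

lemma Rfun_spec {P B s t} (h : t ∈ Wset P B s) :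
    LStem t (Rfun P B s t) ∧ Rfun P B s t ⊆ P ∧ treeBody (Rfun P B s t) ∩ B = ∅ := by
  simp only [Rfun, dif_pos h]
  exact h.2.choose_spec

/-- inductive goodness (Prop version) -/
inductive Good (P W : Set (List ℕ)) (s : List ℕ) : List ℕ → Prop where
  | base (t : List ℕ) (h : t ∈ W) : Good P W s t
  | step (t : List ℕ) (ht : t ∈ P) (hs : s <+: t) (f : ℕ → ℕ) (hinj : Function.Injective f)
      (hg : ∀ n, Good P W s (t ++ [f n])) : Good P W s t

/-- inductive goodness (Type version, for recursion) -/
inductive GoodT (P W : Set (List ℕ)) (s : List ℕ) : List ℕ → Type where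
  | base (t : List ℕ) (h : t ∈ W) : GoodT P W s t
  | step (t : List ℕ) (ht : t ∈ P) (hs : s <+: t) (f : ℕ → ℕ) (hinj : Function.Injective f)
      (hg : ∀ n, GoodT P W s (t ++ [f n])) : GoodT P W s t

lemma Good.toGoodT {P W s t} (h : Good P W s t) : Nonempty (GoodT P W s t) := by
  induction h with
  | base t h => exact ⟨.base t h⟩
  | step t ht hs f hinj hg ih => exact ⟨.step t ht hs f hinj fun n => (ih n).some⟩

/-- Every node of P above the stem is good. -/
lemma good_all {P B s} (hP : LStem s P)
    (hdense : ∀ Q, IsLaverTree Q → Q ⊆ P → ∃ R, IsLaverTree R ∧ R ⊆ Q ∧ treeBody R ∩ B = ∅) :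
    ∀ t ∈ P, s <+: t → Good P (Wset P B s) s t := by
  intro t₀ ht₀ hst₀
  by_contra hbad
  -- every bad node has infinitely many bad successors
  have key : ∀ t ∈ P, s <+: t → ¬ Good P (Wset P B s) s t →
      {n | t ++ [n] ∈ P ∧ ¬ Good P (Wset P B s) s (t ++ [n])}.Infinite := by
    intro t ht hst hng
    by_contra hfin
    rw [Set.not_infinite] at hfin
    have hsucc : (succs P t).Infinite := hP.2.2.2 t ht hst
    have hgoodinf : {n | t ++ [n] ∈ P ∧ Good P (Wset P B s) s (t ++ [n])}.Infinite := by
      apply ((hsucc.diff hfin).mono _)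
      intro n hn
      rcases Classical.em (Good P (Wset P B s) s (t ++ [n])) with h | h
      · exact ⟨hn.1, h⟩
      · exact absurd ⟨hn.1, h⟩ hn.2
    apply hng
    have e := hgoodinf.natEmbedding
    exact Good.step t ht hst (fun n => (e n).val)
      (Subtype.coe_injective.comp e.injective) (fun n => (e n).2.2)
  -- the tree of bad nodes above t₀
  set G := Good P (Wset P B s) s with hG
  set T : Set (List ℕ) := {u ∈ P | u <+: t₀} ∪
      {u ∈ P | t₀ <+: u ∧ ∀ v, t₀ <+: v → v <+: u → ¬ G v} with hT
  have hTP : T ⊆ P := by rintro u (hu | hu) <;> exact hu.1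
  have ht₀T : t₀ ∈ T := by
    refine Or.inr ⟨ht₀, List.prefix_rfl, fun v hv1 hv2 => ?_⟩
    have : v = t₀ := hv2.eq_of_length (le_antisymm hv2.length_le hv1.length_le)
    rw [this]; exact hbad
  have hTstem : LStem t₀ T := by
    constructor
    · constructor
      · exact ⟨t₀, ht₀T⟩
      · rintro u hu n
        rcases hu with ⟨huP, hu⟩ | ⟨huP, hu1, hu2⟩
        · exact Or.inl ⟨hP.1.2 u huP n, (List.take_prefix n u).trans hu⟩
        · rcases List.prefix_or_prefix_of_prefix (List.take_prefix n u) hu1 with h | h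
          · exact Or.inl ⟨hP.1.2 u huP n, h⟩
          · exact Or.inr ⟨hP.1.2 u huP n, h,
              fun v hv1 hv2 => hu2 v hv1 (hv2.trans (List.take_prefix n u))⟩
    refine ⟨ht₀T, ?_, ?_⟩
    · rintro u (⟨_, hu⟩ | ⟨_, hu, _⟩)
      · exact Or.inr hu
      · exact Or.inl hu
    · rintro u hu htu
      rcases hu with ⟨huP, hu⟩ | ⟨huP, hu1, hu2⟩
      · have : u = t₀ := hu.eq_of_length (le_antisymm hu.length_le htu.length_le)
        subst this
        refine (key u huP hst₀ hbad).mono ?_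
        intro n hn
        refine Or.inr ⟨hn.1, ⟨[n], rfl⟩, fun v hv1 hv2 => ?_⟩
        rcases Nat.lt_or_ge v.length (u.length + 1) with hl | hl
        · have : u = v := hv1.eq_of_length (le_antisymm hv1.length_le (by omega))
          rw [← this]; exact hbad
        · have : v = u ++ [n] :=
            hv2.eq_of_length (le_antisymm hv2.length_le (by simp; omega))
          rw [this]; exact hn.2
      · have hbadu : ¬ G u := hu2 u hu1 List.prefix_rfl
        refine (key u huP (hst₀.trans hu1) hbadu).mono ?_
        intro n hn
        refine Or.inr ⟨hn.1, hu1.trans ⟨[n], rfl⟩, fun v hv1 hv2 => ?_⟩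
        rcases List.prefix_or_prefix_of_prefix hv2 (⟨[n], rfl⟩ : u <+: u ++ [n]) with h | h
        · exact hu2 v hv1 h
        · rcases Nat.lt_or_ge v.length (u.length + 1) with hl | hl
          · have : u = v := h.eq_of_length (le_antisymm h.length_le (by omega))
            rw [← this]; exact hbadu
          · have : v = u ++ [n] :=
              hv2.eq_of_length (le_antisymm hv2.length_le (by simp; omega))
            rw [this]; exact hn.2
  obtain ⟨R, hR, hRT, hRB⟩ := hdense T hTstem.isLaver hTP
  obtain ⟨t', hstem⟩ := isLaver_iff.1 hR
  have ht'T : t' ∈ T := hRT hstem.2.1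
  -- t' extends t₀
  have ht₀t' : t₀ <+: t' := by
    rcases ht'T with ⟨_, hu⟩ | ⟨_, hu, _⟩
    · rcases Classical.em (t₀ <+: t') with h | h
      · exact h
      · exfalso
        have hproper : t'.length < t₀.length := by
          rcases lt_or_ge t'.length t₀.length with h' | h'
          · exact h'
          · exact absurd (hu.eq_of_length (le_antisymm hu.length_le h') ▸ List.prefix_rfl) h
        have hsing : (succs R t').Subsingleton := by
          intro n hn m hm
          have h1 : t' ++ [n] = t₀.take (t'.length + 1) := by
            have hmem : t' ++ [n] ∈ T := hRT hn
            rcases hmem with ⟨_, hp⟩ | ⟨_, hp, _⟩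
            · rw [List.prefix_iff_eq_take] at hp
              simpa using hp
            · have hl : (t' ++ [n]).length = t₀.length := by
                have := hp.length_le
                simp at this ⊢; omega
              rw [← hp.eq_of_length hl.symm]
              rw [List.prefix_iff_eq_take] at hp
              simp at hl
              simp [hl]
          have h2 : t' ++ [m] = t₀.take (t'.length + 1) := by
            have hmem : t' ++ [m] ∈ T := hRT hm
            rcases hmem with ⟨_, hp⟩ | ⟨_, hp, _⟩
            · rw [List.prefix_iff_eq_take] at hp
              simpa using hp
            · have hl : (t' ++ [m]).length = t₀.length := by
                have := hp.length_le
                simp at this ⊢; omega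
              rw [← hp.eq_of_length hl.symm]
              rw [List.prefix_iff_eq_take] at hp
              simp at hl
              simp [hl]
          have := h1.trans h2.symm
          simpa using this
        exact hsing.finite.not_infinite (hstem.2.2.2 t' hstem.2.1 List.prefix_rfl)
    · exact hu
  -- t' is bad
  have hbadt' : ¬ G t' := by
    rcases ht'T with ⟨_, hu⟩ | ⟨_, _, hu2⟩
    · have : t' = t₀ := hu.eq_of_length (le_antisymm hu.length_le ht₀t'.length_le)
      rw [this]; exact hbad
    · exact hu2 t' ht₀t' List.prefix_rfl
  -- but t' is in Wset, hence good
  exact hbadt' (Good.base t' ⟨hst₀.trans ht₀t', R, hstem, hRT.trans hTP, hRB⟩)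

/-- the fused tree built from a goodness witness -/
def Qfun (R : List ℕ → Set (List ℕ)) {P W : Set (List ℕ)} {s : List ℕ} :
    {t : List ℕ} → GoodT P W s t → Set (List ℕ)
  | _, .base t _ => R t
  | _, .step t _ _ _ _ hg => {u | u <+: t} ∪ ⋃ n, Qfun R (hg n)

lemma Qfun_spec {P W : Set (List ℕ)} {s : List ℕ} {B : Set (ℕ → ℕ)}
    {R : List ℕ → Set (List ℕ)} (hP : LStem s P)
    (hR : ∀ t ∈ W, LStem t (R t) ∧ R t ⊆ P ∧ treeBody (R t) ∩ B = ∅) :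
    ∀ {t : List ℕ} (g : GoodT P W s t),
      Qfun R g ⊆ P ∧
      (∀ u ∈ Qfun R g, u <+: t ∨ t <+: u) ∧
      ({u | u <+: t} ⊆ Qfun R g) ∧
      (∀ u ∈ Qfun R g, ∀ n, u.take n ∈ Qfun R g) ∧
      (∀ u ∈ Qfun R g, t <+: u → (succs (Qfun R g) u).Infinite) ∧
      (treeBody (Qfun R g) ∩ B = ∅) := by
  intro t g
  induction g with
  | base t h =>
    obtain ⟨hst, hsub, hbody⟩ := hR t h
    refine ⟨hsub, fun u hu => (hst.2.2.1 u hu).symm, ?_, fun u hu n => hst.1.2 u hu n,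
      fun u hu htu => (hst.2.2.2 u hu htu).mono (fun n hn => hn), hbody⟩
    intro u hu
    rw [Set.mem_setOf_eq, List.prefix_iff_eq_take] at hu
    rw [hu]
    exact hst.1.2 t hst.2.1 u.length
  | step t ht hs f hinj hg ih =>
    have hQdef : Qfun R (GoodT.step t ht hs f hinj hg) =
        {u | u <+: t} ∪ ⋃ n, Qfun R (hg n) := rfl
    rw [hQdef]
    have hpre_mem : ∀ u, u <+: t → u ∈ P := by
      intro u hu
      rw [List.prefix_iff_eq_take] at hu
      rw [hu]; exact hP.1.2 t ht u.length
    have hchild_root : ∀ n, t ++ [f n] ∈ Qfun R (hg n) := by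
      intro n
      exact (ih n).2.2.1 List.prefix_rfl
    constructor
    · rintro u (hu | hu)
      · exact hpre_mem u hu
      · obtain ⟨_, ⟨n, rfl⟩, hn⟩ := hu
        exact (ih n).1 hn
    constructor
    · rintro u (hu | hu)
      · exact Or.inl hu
      · obtain ⟨_, ⟨n, rfl⟩, hn⟩ := hu
        rcases (ih n).2.1 u hn with h | h
        · exact List.prefix_or_prefix_of_prefix h (⟨[f n], rfl⟩ : t <+: t ++ [f n])
        · exact Or.inr (List.IsPrefix.trans ⟨[f n], rfl⟩ h)
    constructor
    · exact fun u hu => Or.inl hu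
    constructor
    · rintro u (hu | hu) n
      · exact Or.inl ((List.take_prefix n u).trans hu)
      · obtain ⟨_, ⟨m, rfl⟩, hm⟩ := hu
        exact Or.inr (Set.mem_iUnion.2 ⟨m, (ih m).2.2.2.1 u hm n⟩)
    constructor
    · rintro u hu htu
      rcases Classical.em (u = t) with rfl | hne
      · -- successors are the f n
        have : (Set.range f) ⊆ succs ({w | w <+: u} ∪ ⋃ n, Qfun R (hg n)) u := by
          rintro m ⟨n, rfl⟩
          exact Or.inr (Set.mem_iUnion.2 ⟨n, hchild_root n⟩)
        exact (Set.infinite_range_of_injective hinj).mono this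
      · rcases hu with hu | hu
        · exact absurd (hu.eq_of_length (le_antisymm hu.length_le htu.length_le)) hne
        · obtain ⟨_, ⟨n, rfl⟩, hn⟩ := hu
          have htfn : t ++ [f n] <+: u := by
            rcases (ih n).2.1 u hn with h | h
            · rcases Nat.lt_or_ge u.length (t.length + 1) with hl | hl
              · exact absurd (htu.eq_of_length (le_antisymm htu.length_le (by omega))).symm hne
              · rw [h.eq_of_length (le_antisymm h.length_le (by simp; omega))]
            · exact h
          refine ((ih n).2.2.2.2.1 u hn htfn).mono ?_
          intro m hm
          exact Or.inr (Set.mem_iUnion.2 ⟨n, hm⟩)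
    · -- body disjoint from B
      rw [Set.eq_empty_iff_forall_notMem]
      rintro x ⟨hx, hxB⟩
      rw [mem_treeBody] at hx
      have hu1 : seg x (t.length + 1) ∈ _ := hx (t.length + 1)
      rcases hu1 with hu1 | hu1
      · have := hu1.length_le
        rw [seg_length] at this; omega
      obtain ⟨_, ⟨n, rfl⟩, hn⟩ := hu1
      have hseg_eq : seg x (t.length + 1) = t ++ [f n] := by
        rcases (ih n).2.1 _ hn with h | h
        · exact h.eq_of_length (by simp [seg_length])
        · exact (h.eq_of_length (by simp [seg_length])).symm
      have hxn : x ∈ treeBody (Qfun R (hg n)) := by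
        intro m
        rcases le_or_gt m (t.length + 1) with hm | hm
        · apply (ih n).2.2.1
          show seg x m <+: t ++ [f n]
          rw [← hseg_eq]
          exact seg_prefix x hm
        · have hv := hx m
          rcases hv with hv | hv
          · have := hv.length_le
            rw [seg_length] at this; omega
          obtain ⟨_, ⟨k, rfl⟩, hk⟩ := hv
          have htfk : t ++ [f k] <+: seg x m := by
            rcases (ih k).2.1 _ hk with h | h
            · have hlen : (t ++ [f k]).length ≤ (seg x m).length := by
                simp [seg_length]; omega
              rw [(h.eq_of_length (le_antisymm h.length_le hlen))]
            · exact h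
          have : t ++ [f k] = t ++ [f n] := by
            rw [← hseg_eq]
            have h1 : t ++ [f k] <+: seg x m := htfk
            have h2 : seg x (t.length + 1) <+: seg x m := seg_prefix x (by omega)
            rcases List.prefix_or_prefix_of_prefix h1 h2 with h | h
            · exact h.eq_of_length (by simp [seg_length])
            · exact (h.eq_of_length (by simp [seg_length])).symm
          have : k = n := hinj (by simpa using this)
          rw [← this]; exact hk
      have := (ih n).2.2.2.2.2
      rw [Set.eq_empty_iff_forall_notMem] at this
      exact this x ⟨hxn, hxB⟩

/-- The stem lemma: if Laver trees avoiding B are dense below P, then P has a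
Laver subtree with the same stem avoiding B. -/
lemma stem_lemma {P : Set (List ℕ)} {B : Set (ℕ → ℕ)} {s : List ℕ} (hP : LStem s P)
    (hdense : ∀ Q, IsLaverTree Q → Q ⊆ P → ∃ R, IsLaverTree R ∧ R ⊆ Q ∧ treeBody R ∩ B = ∅) :
    ∃ Q, LStem s Q ∧ Q ⊆ P ∧ treeBody Q ∩ B = ∅ := by
  have hgood : Good P (Wset P B s) s s := good_all hP hdense s hP.2.1 List.prefix_rfl
  obtain ⟨g⟩ := hgood.toGoodT
  have hR : ∀ t ∈ Wset P B s, LStem t (Rfun P B s t) ∧ Rfun P B s t ⊆ P ∧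
      treeBody (Rfun P B s t) ∩ B = ∅ := fun t ht => Rfun_spec ht
  obtain ⟨h1, h2, h3, h4, h5, h6⟩ := Qfun_spec hP hR g
  refine ⟨Qfun (Rfun P B s) g, ⟨⟨⟨s, h3 List.prefix_rfl⟩, fun u hu n => h4 u hu n⟩,
    h3 List.prefix_rfl, fun u hu => (h2 u hu).symm, fun u hu hsu => h5 u hu hsu⟩, h1, h6⟩

/-! ### Fusion: the Laver ideal is a σ-ideal -/

/-- choice of a stem-preserving Laver subtree avoiding Bs n -/
noncomputable def fCh (Bs : ℕ → Set (ℕ → ℕ)) (n : ℕ) (t : List ℕ) (R : Set (List ℕ)) :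
    Set (List ℕ) :=
  letI := Classical.dec (∃ R', LStem t R' ∧ R' ⊆ R ∧ treeBody R' ∩ Bs n = ∅)
  if h : ∃ R', LStem t R' ∧ R' ⊆ R ∧ treeBody R' ∩ Bs n = ∅ then h.choose else ∅

lemma fCh_spec {Bs n t R} (h : ∃ R', LStem t R' ∧ R' ⊆ R ∧ treeBody R' ∩ Bs n = ∅) :
    LStem t (fCh Bs n t R) ∧ fCh Bs n t R ⊆ R ∧ treeBody (fCh Bs n t R) ∩ Bs n = ∅ := by
  simp only [fCh, dif_pos h]
  exact h.choose_spec

/-- the fusion scheme: assignments of Laver trees to nodes, level by level -/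
noncomputable def fusA (Bs : ℕ → Set (ℕ → ℕ)) (s : List ℕ) (P : Set (List ℕ)) :
    ℕ → Set (List ℕ × Set (List ℕ))
  | 0 => {(s, fCh Bs 0 s P)}
  | d + 1 => {p | ∃ q ∈ fusA Bs s P d, ∃ n, q.1 ++ [n] ∈ q.2 ∧
      p = (q.1 ++ [n], fCh Bs (d + 1) (q.1 ++ [n]) (subAt q.2 (q.1 ++ [n])))}

section Fusion

variable {P : Set (List ℕ)} {s : List ℕ} {Bs : ℕ → Set (ℕ → ℕ)}

lemma fusA_inv (hP : LStem s P)
    (hsd : ∀ (n : ℕ) (t : List ℕ) (R : Set (List ℕ)), LStem t R → R ⊆ P →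
      ∃ R', LStem t R' ∧ R' ⊆ R ∧ treeBody R' ∩ Bs n = ∅) :
    ∀ d, ∀ p ∈ fusA Bs s P d, p.1.length = s.length + d ∧ s <+: p.1 ∧
      LStem p.1 p.2 ∧ p.2 ⊆ P ∧ treeBody p.2 ∩ Bs d = ∅ := by
  intro d
  induction d with
  | zero =>
    rintro p hp
    rw [fusA, Set.mem_singleton_iff] at hp
    subst hp
    obtain ⟨h1, h2, h3⟩ := fCh_spec (hsd 0 s P hP (subset_refl P))
    exact ⟨rfl, List.prefix_rfl, h1, h2.trans (subset_refl P), h3⟩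
  | succ d ih =>
    rintro p hp
    rw [fusA] at hp
    obtain ⟨q, hq, n, hn, rfl⟩ := hp
    obtain ⟨hlen, hspre, hqst, hqP, _⟩ := ih q hq
    have hq1n : q.1 <+: q.1 ++ [n] := ⟨[n], rfl⟩
    have hsub : LStem (q.1 ++ [n]) (subAt q.2 (q.1 ++ [n])) := hqst.subAt hn hq1n
    have hex := hsd (d+1) (q.1 ++ [n]) (subAt q.2 (q.1 ++ [n])) hsub
      ((subAt_subset _ _).trans hqP)
    obtain ⟨h1, h2, h3⟩ := fCh_spec hex
    refine ⟨by simp [hlen]; omega, hspre.trans hq1n, h1,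
      (h2.trans (subAt_subset _ _)).trans hqP, h3⟩

lemma fusA_func (hP : LStem s P)
    (hsd : ∀ (n : ℕ) (t : List ℕ) (R : Set (List ℕ)), LStem t R → R ⊆ P →
      ∃ R', LStem t R' ∧ R' ⊆ R ∧ treeBody R' ∩ Bs n = ∅) :
    ∀ d, ∀ p ∈ fusA Bs s P d, ∀ p' ∈ fusA Bs s P d, p.1 = p'.1 → p = p' := by
  intro d
  induction d with
  | zero =>
    rintro p hp p' hp'
    rw [fusA, Set.mem_singleton_iff] at hp hp'
    subst hp; subst hp'; intro; rfl
  | succ d ih =>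
    rintro p hp p' hp' heq
    rw [fusA] at hp hp'
    obtain ⟨q, hq, n, hn, rfl⟩ := hp
    obtain ⟨q', hq', n', hn', rfl⟩ := hp'
    simp only at heq
    have hlen : q.1.length = q'.1.length := by
      rw [(fusA_inv hP hsd d q hq).1, (fusA_inv hP hsd d q' hq').1]
    have hq1 : q.1 = q'.1 := by
      have := heq
      have h1 : q.1 <+: q'.1 ++ [n'] := heq ▸ (⟨[n], rfl⟩ : q.1 <+: q.1 ++ [n])
      have h2 : q'.1 <+: q'.1 ++ [n'] := ⟨[n'], rfl⟩
      rcases List.prefix_or_prefix_of_prefix h1 h2 with h | h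
      · exact h.eq_of_length hlen
      · exact (h.eq_of_length hlen.symm).symm
    have hqq : q = q' := ih q hq q' hq' hq1
    subst hqq
    have hnn : n = n' := by
      rw [← hq1] at heq
      simpa using heq
    rw [← hq1, ← hnn]

/-- nesting along a branch -/
lemma fusA_nest (hP : LStem s P)
    (hsd : ∀ (n : ℕ) (t : List ℕ) (R : Set (List ℕ)), LStem t R → R ⊆ P →
      ∃ R', LStem t R' ∧ R' ⊆ R ∧ treeBody R' ∩ Bs n = ∅)
    {d : ℕ} {t t' : List ℕ} {R R' : Set (List ℕ)}
    (h : (t, R) ∈ fusA Bs s P d) (h' : (t', R') ∈ fusA Bs s P (d+1)) (hpre : t <+: t') :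
    R' ⊆ R := by
  have hp' := h'
  rw [fusA] at hp'
  obtain ⟨q, hq, n, hn, heq⟩ := hp'
  have hq1 : q.1 = t := by
    have hlen : q.1.length = t.length := by
      rw [(fusA_inv hP hsd d q hq).1, (fusA_inv hP hsd d (t, R) h).1]
    have h1 : q.1 <+: t' := by
      have : q.1 <+: q.1 ++ [n] := ⟨[n], rfl⟩
      have ht' : t' = q.1 ++ [n] := congrArg Prod.fst heq
      rw [ht']; exact this
    rcases List.prefix_or_prefix_of_prefix h1 hpre with hh | hh
    · exact hh.eq_of_length hlen
    · exact (hh.eq_of_length hlen.symm).symm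
  have : q = (t, R) := fusA_func hP hsd d q hq (t, R) h hq1
  subst this
  have hR' : R' = fCh Bs (d+1) (t ++ [n]) (subAt R (t ++ [n])) := congrArg Prod.snd heq
  have hsub : LStem (t ++ [n]) (subAt R (t ++ [n])) :=
    (fusA_inv hP hsd d (t, R) h).2.2.1.subAt hn ⟨[n], rfl⟩
  have hex := hsd (d+1) (t ++ [n]) (subAt R (t ++ [n])) hsub
    ((subAt_subset _ _).trans (fusA_inv hP hsd d (t, R) h).2.2.2.1)
  rw [hR']
  exact (fCh_spec hex).2.1.trans (subAt_subset _ _)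

/-- The fusion lemma: countably many dense avoidance conditions can be met at once. -/
lemma fusion (hP : LStem s P)
    (hdense : ∀ (n : ℕ) (Q : Set (List ℕ)), IsLaverTree Q → Q ⊆ P →
      ∃ R, IsLaverTree R ∧ R ⊆ Q ∧ treeBody R ∩ Bs n = ∅) :
    ∃ Q, IsLaverTree Q ∧ Q ⊆ P ∧ treeBody Q ∩ (⋃ n, Bs n) = ∅ := by
  have hsd : ∀ (n : ℕ) (t : List ℕ) (R : Set (List ℕ)), LStem t R → R ⊆ P →
      ∃ R', LStem t R' ∧ R' ⊆ R ∧ treeBody R' ∩ Bs n = ∅ := by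
    intro n t R h hRP
    exact stem_lemma h (fun Q hQ hQR => hdense n Q hQ (hQR.trans hRP))
  set Q : Set (List ℕ) := {u | (∃ n, u = s.take n) ∨ ∃ d R, (u, R) ∈ fusA Bs s P d} with hQdef
  have hsQ : s ∈ Q := Or.inl ⟨s.length, List.take_length.symm⟩
  have hmemQ : ∀ d p, p ∈ fusA Bs s P d → p.1 ∈ Q := fun d p hp => Or.inr ⟨d, p.2, hp⟩
  -- take closure
  have htake : ∀ u ∈ Q, ∀ n, u.take n ∈ Q := by
    have key : ∀ d, ∀ p ∈ fusA Bs s P d, ∀ n, p.1.take n ∈ Q := by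
      intro d
      induction d with
      | zero =>
        rintro p hp n
        rw [fusA, Set.mem_singleton_iff] at hp
        subst hp
        exact Or.inl ⟨n, rfl⟩
      | succ d ih =>
        rintro p hp n
        rw [fusA] at hp
        obtain ⟨q, hq, m, hm, rfl⟩ := hp
        rcases le_or_gt n q.1.length with h | h
        · rw [List.take_append_of_le_length h]
          exact ih q hq n
        · rcases le_or_gt ((q.1 ++ [m]) : List ℕ).length n with h' | h'
          · rw [List.take_of_length_le h']
            exact hmemQ (d+1) _ (by
              rw [fusA]
              exact ⟨q, hq, m, hm, rfl⟩)
          · exfalso; simp at h'; omega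
    rintro u (⟨n, rfl⟩ | ⟨d, R, hdR⟩) m
    · rw [List.take_take]
      exact Or.inl ⟨min m n, rfl⟩
    · exact key d (u, R) hdR m
  -- comparability
  have hcomp : ∀ u ∈ Q, s <+: u ∨ u <+: s := by
    rintro u (⟨n, rfl⟩ | ⟨d, R, hdR⟩)
    · exact Or.inr (List.take_prefix n s)
    · exact Or.inl (fusA_inv hP hsd d (u, R) hdR).2.1
  -- successor sets
  have hsucc : ∀ u ∈ Q, s <+: u → (succs Q u).Infinite := by
    rintro u hu hsu
    have hassigned : ∃ d R, (u, R) ∈ fusA Bs s P d := by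
      rcases hu with ⟨n, rfl⟩ | h
      · have : s.take n = s := by
          have h1 := (List.take_prefix n s).length_le
          have h2 := hsu.length_le
          exact (List.take_prefix n s).eq_of_length (by omega)
        rw [this]
        refine ⟨0, fCh Bs 0 s P, ?_⟩
        rw [fusA]; rfl
      · exact h
    obtain ⟨d, R, hdR⟩ := hassigned
    have hst : LStem u R := (fusA_inv hP hsd d (u, R) hdR).2.2.1
    refine (hst.2.2.2 u hst.2.1 List.prefix_rfl).mono ?_
    intro n hn
    refine hmemQ (d+1) (u ++ [n], fCh Bs (d+1) (u ++ [n]) (subAt R (u ++ [n]))) ?_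
    rw [fusA]
    exact ⟨(u, R), hdR, n, hn, rfl⟩
  have hQP : Q ⊆ P := by
    rintro u (⟨n, rfl⟩ | ⟨d, R, hdR⟩)
    · exact hP.1.2 s hP.2.1 n
    · exact (fusA_inv hP hsd d (u, R) hdR).2.2.2.1 ((fusA_inv hP hsd d (u, R) hdR).2.2.1.2.1)
  have hQL : LStem s Q := ⟨⟨⟨s, hsQ⟩, htake⟩, hsQ, fun u hu => hcomp u hu, hsucc⟩
  refine ⟨Q, hQL.isLaver, hQP, ?_⟩
  -- the body avoids every Bs i
  rw [Set.eq_empty_iff_forall_notMem]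
  rintro x ⟨hx, hxB⟩
  rw [Set.mem_iUnion] at hxB
  obtain ⟨i, hxi⟩ := hxB
  rw [mem_treeBody] at hx
  -- each level prefix is assigned
  have hlev : ∀ d, ∃ R, (seg x (s.length + d), R) ∈ fusA Bs s P d := by
    intro d
    have hu := hx (s.length + d)
    rcases hu with ⟨n, hn⟩ | ⟨e, R, heR⟩
    · have h1 : (s.take n).length = s.length + d := by rw [← hn, seg_length]
      have h2 : (s.take n).length ≤ s.length := (List.take_prefix n s).length_le
      have hd0 : d = 0 := by omega
      subst hd0
      have : seg x (s.length + 0) = s := by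
        rw [hn]
        exact (List.take_prefix n s).eq_of_length (by omega)
      rw [this]
      exact ⟨fCh Bs 0 s P, by rw [fusA]; rfl⟩
    · have : e = d := by
        have := (fusA_inv hP hsd e _ heR).1
        simp only [seg_length] at this
        omega
      subst this
      exact ⟨R, heR⟩
  choose Rx hRx using hlev
  have hnest : ∀ d, Rx (d+1) ⊆ Rx d := by
    intro d
    exact fusA_nest hP hsd (hRx d) (hRx (d+1)) (by
      have := seg_prefix x (show s.length + d ≤ s.length + (d+1) by omega)
      exact this)
  have hnest' : ∀ e d, d ≤ e → Rx e ⊆ Rx d := by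
    intro e
    induction e with
    | zero => intro d hd; rw [Nat.le_zero.1 hd]
    | succ e ih =>
      intro d hd
      rcases Nat.lt_or_ge d (e+1) with h | h
      · exact (hnest e).trans (ih d (by omega))
      · have : d = e + 1 := by omega
        rw [this]
  have hxRi : x ∈ treeBody (Rx i) := by
    intro m
    show seg x m ∈ Rx i
    rcases le_or_gt (s.length + i) m with h | h
    · have h2 : seg x m = seg x (s.length + (m - s.length - i + i)) := by
        congr 1; omega
      rw [h2]
      have hmem : seg x (s.length + (m - s.length - i + i)) ∈ Rx (m - s.length - i + i) :=
        (fusA_inv hP hsd _ _ (hRx _)).2.2.1.2.1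
      exact hnest' _ i (by omega) hmem
    · have h2 : seg x m = (seg x (s.length + i)).take m := by
        rw [seg_take, min_eq_left (by omega)]
      rw [h2]
      exact (fusA_inv hP hsd i _ (hRx i)).2.2.1.1.2 _
        ((fusA_inv hP hsd i _ (hRx i)).2.2.1.2.1) m
  have hdisj := (fusA_inv hP hsd i _ (hRx i)).2.2.2.2
  rw [Set.eq_empty_iff_forall_notMem] at hdisj
  exact hdisj x ⟨hxRi, hxi⟩

end Fusion

/-! ### Laver measurability -/

/-- Laver measurability -/
def LM (A : Set (ℕ → ℕ)) : Prop :=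
  ∀ P, IsLaverTree P → ∃ Q, IsLaverTree Q ∧ Q ⊆ P ∧
    (treeBody Q ⊆ A ∨ treeBody Q ∩ A = ∅)

lemma LM.empty : LM (∅ : Set (ℕ → ℕ)) := by
  intro P hP
  exact ⟨P, hP, subset_refl P, Or.inr (by simp)⟩

lemma LM.compl {A : Set (ℕ → ℕ)} (h : LM A) : LM Aᶜ := by
  intro P hP
  obtain ⟨Q, hQ, hQP, hcase⟩ := h P hP
  refine ⟨Q, hQ, hQP, ?_⟩
  rcases hcase with h | h
  · exact Or.inr (by rw [Set.eq_empty_iff_forall_notMem]; intro x ⟨h1, h2⟩; exact h2 (h h1))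
  · refine Or.inl (fun x hx hxA => ?_)
    rw [Set.eq_empty_iff_forall_notMem] at h
    exact h x ⟨hx, hxA⟩

lemma LM.iUnion {As : ℕ → Set (ℕ → ℕ)} (h : ∀ n, LM (As n)) : LM (⋃ n, As n) := by
  intro P hP
  obtain ⟨s, hs⟩ := isLaver_iff.1 hP
  rcases Classical.em (∃ Q, IsLaverTree Q ∧ Q ⊆ P ∧ treeBody Q ⊆ ⋃ n, As n) with hyes | hno
  · obtain ⟨Q, h1, h2, h3⟩ := hyes
    exact ⟨Q, h1, h2, Or.inl h3⟩
  · have hdense : ∀ (n : ℕ) (Q : Set (List ℕ)), IsLaverTree Q → Q ⊆ P →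
        ∃ R, IsLaverTree R ∧ R ⊆ Q ∧ treeBody R ∩ As n = ∅ := by
      intro n Q hQ hQP
      obtain ⟨R, hR, hRQ, hcase⟩ := h n Q hQ
      rcases hcase with hc | hc
      · exact absurd ⟨R, hR, hRQ.trans hQP, hc.trans (Set.subset_iUnion As n)⟩ hno
      · exact ⟨R, hR, hRQ, hc⟩
    obtain ⟨Q, h1, h2, h3⟩ := fusion hs hdense
    exact ⟨Q, h1, h2, Or.inr h3⟩

/-- basic cylinder -/
def Ncyl (v : List ℕ) : Set (ℕ → ℕ) := {x | seg x v.length = v}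

lemma LM.ncyl (v : List ℕ) : LM (Ncyl v) := by
  intro P hP
  obtain ⟨s, hs⟩ := isLaver_iff.1 hP
  obtain ⟨t, htP, hst, hlen⟩ := exists_long_node hs v.length
  have hsub : LStem t (subAt P t) := hs.subAt htP hst
  have hbody : ∀ x ∈ treeBody (subAt P t), seg x v.length = t.take v.length := by
    intro x hx
    have hmem : seg x t.length ∈ subAt P t := hx t.length
    have hcmp := hmem.2
    have heq : seg x t.length = t := by
      rcases hcmp with h | h
      · exact h.eq_of_length (by simp [seg_length])
      · exact (h.eq_of_length (by simp [seg_length])).symm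
    calc seg x v.length = (seg x t.length).take v.length := by
          rw [seg_take, min_eq_left hlen]
      _ = t.take v.length := by rw [heq]
  rcases Classical.em (t.take v.length = v) with hv | hv
  · refine ⟨subAt P t, hsub.isLaver, subAt_subset P t, Or.inl ?_⟩
    intro x hx
    show seg x v.length = v
    rw [hbody x hx, hv]
  · refine ⟨subAt P t, hsub.isLaver, subAt_subset P t, Or.inr ?_⟩
    rw [Set.eq_empty_iff_forall_notMem]
    rintro x ⟨hx, hxv⟩
    exact hv ((hbody x hx).symm.trans hxv)

lemma LM.open {U : Set (ℕ → ℕ)} (hU : IsOpen U) : LM U := by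
  classical
  set C : List ℕ → Set (ℕ → ℕ) := fun v => if Ncyl v ⊆ U then Ncyl v else ∅ with hC
  have hUeq : U = ⋃ v, C v := by
    apply Set.eq_of_subset_of_subset
    · intro x hx
      rw [isOpen_pi_iff] at hU
      obtain ⟨I, u, hu, hpi⟩ := hU x hx
      set k := I.sup id + 1 with hk
      have hIk : ∀ a ∈ I, a < k := by
        intro a ha
        have : a ≤ I.sup id := Finset.le_sup (f := id) ha
        omega
      have hNsub : Ncyl (seg x k) ⊆ U := by
        intro y hy
        apply hpi
        intro a ha
        have hlen : (seg x k).length = k := seg_length x k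
        have : seg y (seg x k).length = seg x k := hy
        rw [hlen] at this
        have : y a = x a := by
          have h1 : (seg y k)[a]'(by rw [seg_length]; exact hIk a ha) =
              (seg x k)[a]'(by rw [seg_length]; exact hIk a ha) := by
            simp only [this]
          rwa [seg_getElem, seg_getElem] at h1
        rw [this]
        exact (hu a ha).2
      have hxN : x ∈ Ncyl (seg x k) := by
        show seg x (seg x k).length = seg x k
        rw [seg_length]
      refine Set.mem_iUnion.2 ⟨seg x k, ?_⟩
      rw [hC]
      simp only [if_pos hNsub]
      exact hxN
    · intro x hx
      rw [Set.mem_iUnion] at hx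
      obtain ⟨v, hv⟩ := hx
      rw [hC] at hv
      simp only at hv
      by_cases hcase : Ncyl v ⊆ U
      · rw [if_pos hcase] at hv; exact hcase hv
      · rw [if_neg hcase] at hv; exact absurd hv (Set.notMem_empty x)
  have e : ℕ ≃ List ℕ := (Denumerable.eqv (List ℕ)).symm
  have hUeq2 : U = ⋃ n, C (e n) := by
    rw [hUeq]
    apply Set.eq_of_subset_of_subset
    · intro x hx
      rw [Set.mem_iUnion] at hx ⊢
      obtain ⟨v, hv⟩ := hx
      exact ⟨e.symm v, by rwa [Equiv.apply_symm_apply]⟩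
    · intro x hx
      rw [Set.mem_iUnion] at hx ⊢
      obtain ⟨n, hn⟩ := hx
      exact ⟨e n, hn⟩
  rw [hUeq2]
  apply LM.iUnion
  intro n
  by_cases hcase : Ncyl (e n) ⊆ U
  · rw [hC]; simpa only [if_pos hcase] using LM.ncyl (e n)
  · rw [hC]; simpa only [if_neg hcase] using LM.empty

lemma LM.of_borel {A : Set (ℕ → ℕ)} (hA : MeasurableSet[borel (ℕ → ℕ)] A) : LM A := by
  have : MeasurableSet[MeasurableSpace.generateFrom {s : Set (ℕ → ℕ) | IsOpen s}] A := hA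
  refine MeasurableSpace.generateFrom_induction {s : Set (ℕ → ℕ) | IsOpen s}
    (fun s _ => LM s) (fun t ht _ => LM.open ht) LM.empty (fun t _ h => h.compl)
    (fun s _ h => LM.iUnion h) A this

/-- a Borel set belongs to l₀ iff it contains the body of no Laver tree. -/
theorem stmt8 (B : Set (ℕ → ℕ)) (hB : MeasurableSet[borel (ℕ → ℕ)] B) :
    B ∈ treeIdeal {T | IsLaverTree T} ↔ ¬ ∃ T, IsLaverTree T ∧ treeBody T ⊆ B := by
  constructor
  · rintro hB0 ⟨T, hT, hTB⟩
    obtain ⟨Q, hQ, hQT, hdisj⟩ := hB0 T hT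
    obtain ⟨s, hs⟩ := isLaver_iff.1 hQ
    obtain ⟨x, hx⟩ := hs.body_nonempty
    rw [Set.eq_empty_iff_forall_notMem] at hdisj
    exact hdisj x ⟨hx, hTB (treeBody_mono hQT hx)⟩
  · intro hno P hP
    obtain ⟨Q, hQ, hQP, hcase⟩ := LM.of_borel hB P hP
    rcases hcase with h | h
    · exact absurd ⟨Q, hQ, h⟩ hno
    · exact ⟨Q, hQ, hQP, h⟩
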